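/- Let A, B, R be three points of the Euclidean plane ℝ² such that R does not lie on the line through A and B. Then the Lebesgue measure of the set of angles θ ∈ [0, 2π) for which the ray from R in direction (cos θ, sin θ) intersects the closed segment from A to B — that is, the set {θ ∈ [0, 2π) : ∃ t ≥ 0, ∃ s ∈ [0,1], R + t·(cos θ, sin θ) = A + s·(B − A)} — equals the (undirected) angle ∠ARB at the vertex R of the triangle ARB. -/

import Mathlib

open Real Set EuclideanGeometry

/-- The direction vector of angle `θ` in the Euclidean plane. -/
noncomputable def dirVec (θ : ℝ) : EuclideanSpace ℝ (Fin 2) :=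
  (WithLp.equiv 2 (Fin 2 → ℝ)).symm ![Real.cos θ, Real.sin θ]

lemma aux_sin_neg_big {y : ℝ} (h1 : π < y) (h2 : y < 2*π) : Real.sin y < 0 := by
  have := Real.sin_pos_of_pos_of_lt_pi (x := y - π) (by linarith) (by linarith)
  rw [Real.sin_sub_pi] at this; linarith

lemma aux_sin_interval {γ x : ℝ} (hγ0 : 0 < γ) (hγπ : γ ≤ π)
    (hx1 : -(2*π) < x) (hx2 : x < 2*π) :
    (0 ≤ Real.sin x ∧ 0 ≤ Real.sin (γ - x)) ↔ ((0 ≤ x ∧ x ≤ γ) ∨ x ≤ γ - 2*π) := by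
  have hπ := Real.pi_pos
  constructor
  · rintro ⟨h1, h2⟩
    by_contra hc
    push_neg at hc
    obtain ⟨hc1, hc2⟩ := hc
    rcases lt_or_ge x 0 with hx0 | hx0
    · rcases lt_or_ge (-π) x with h | h
      · exact absurd h1 (not_le.mpr (Real.sin_neg_of_neg_of_neg_pi_lt hx0 h))
      · have : Real.sin (γ - x) < 0 := aux_sin_neg_big (by linarith) (by linarith)
        linarith
    · have hγx : γ < x := hc1 hx0
      rcases le_or_gt x π with h | h
      · have : Real.sin (γ - x) < 0 :=
          Real.sin_neg_of_neg_of_neg_pi_lt (by linarith) (by linarith)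
        linarith
      · have : Real.sin x < 0 := aux_sin_neg_big h hx2
        linarith
  · rintro (⟨h1, h2⟩ | h)
    · exact ⟨Real.sin_nonneg_of_nonneg_of_le_pi h1 (by linarith),
        Real.sin_nonneg_of_nonneg_of_le_pi (by linarith) (by linarith)⟩
    · have e1 : Real.sin x = Real.sin (x + 2*π) := (Real.sin_add_two_pi x).symm
      have e2 : Real.sin (γ - x) = Real.sin ((γ - x) - 2*π) := by
        rw [Real.sin_sub_two_pi]
      constructor
      · rw [e1]
        exact Real.sin_nonneg_of_nonneg_of_le_pi (by linarith) (by linarith)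
      · rw [e2]
        exact Real.sin_nonneg_of_nonneg_of_le_pi (by linarith) (by linarith)

lemma aux_ray_iff {a0 a1 b0 b1 cθ sθ : ℝ} (hu : cθ^2 + sθ^2 = 1)
    (hD : 0 < a0*b1 - a1*b0) :
    (∃ t, 0 ≤ t ∧ ∃ s, (0 ≤ s ∧ s ≤ 1) ∧
      t*cθ = (1-s)*a0 + s*b0 ∧ t*sθ = (1-s)*a1 + s*b1) ↔
    (0 ≤ cθ*b1 - sθ*b0 ∧ 0 ≤ a0*sθ - a1*cθ) := by
  constructor
  · rintro ⟨t, ht, s, ⟨hs0, hs1⟩, h1, h2⟩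
    have k1 : t*(cθ*b1 - sθ*b0) = (1-s)*(a0*b1-a1*b0) := by linear_combination b1*h1 - b0*h2
    have k2 : t*(a0*sθ - a1*cθ) = s*(a0*b1-a1*b0) := by linear_combination a0*h2 - a1*h1
    have htpos : 0 < t := by
      rcases eq_or_lt_of_le ht with h0 | h0
      · exfalso
        rw [← h0] at k1 k2
        have hsplit : a0*b1 - a1*b0 = (1-s)*(a0*b1-a1*b0) + s*(a0*b1-a1*b0) := by ring
        rw [zero_mul] at k1 k2
        linarith
      · exact h0
    constructor
    · nlinarith [mul_nonneg (sub_nonneg.mpr hs1) hD.le]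
    · nlinarith [mul_nonneg hs0 hD.le]
  · rintro ⟨h1, h2⟩
    have hDne : a0*b1 - a1*b0 ≠ 0 := ne_of_gt hD
    set c1 := (cθ*b1 - sθ*b0)/(a0*b1 - a1*b0) with hc1def
    set c2 := (a0*sθ - a1*cθ)/(a0*b1 - a1*b0) with hc2def
    have hc1 : 0 ≤ c1 := div_nonneg h1 hD.le
    have hc2 : 0 ≤ c2 := div_nonneg h2 hD.le
    have hu0 : c1*a0 + c2*b0 = cθ := by
      rw [hc1def, hc2def, div_mul_eq_mul_div, div_mul_eq_mul_div, ← add_div, div_eq_iff hDne]; ring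
    have hu1 : c1*a1 + c2*b1 = sθ := by
      rw [hc1def, hc2def, div_mul_eq_mul_div, div_mul_eq_mul_div, ← add_div, div_eq_iff hDne]; ring
    have hsum : 0 < c1 + c2 := by
      rcases eq_or_lt_of_le (add_nonneg hc1 hc2) with h0 | h0
      · exfalso
        have hc1z : c1 = 0 := by linarith
        have hc2z : c2 = 0 := by linarith
        rw [hc1z, hc2z] at hu0 hu1
        simp at hu0 hu1
        rw [← hu0, ← hu1] at hu
        norm_num at hu
      · exact h0
    refine ⟨1/(c1+c2), by positivity, c2/(c1+c2),
      ⟨div_nonneg hc2 hsum.le, by rw [div_le_one hsum]; linarith⟩, ?_, ?_⟩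
    · rw [← hu0]; field_simp; ring
    · rw [← hu1]; field_simp; ring

lemma aux_polar {x y : ℝ} (h : ¬(x = 0 ∧ y = 0)) :
    ∃ r α, 0 < r ∧ α ∈ Ico 0 (2*π) ∧ x = r * Real.cos α ∧ y = r * Real.sin α := by
  have hπ := Real.pi_pos
  set z : ℂ := ⟨x, y⟩ with hz
  have hzne : z ≠ 0 := by
    intro h0
    apply h
    rw [Complex.ext_iff] at h0
    exact ⟨h0.1, h0.2⟩
  have habs : 0 < ‖z‖ := by
    exact norm_pos_iff.mpr hzne
  have hane : ‖z‖ ≠ 0 := ne_of_gt habs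
  have hx : x = ‖z‖ * Real.cos z.arg := by
    rw [Complex.cos_arg hzne, mul_div_cancel₀ _ hane, hz]
  have hy : y = ‖z‖ * Real.sin z.arg := by
    rw [Complex.sin_arg, mul_div_cancel₀ _ hane, hz]
  have harg1 := Complex.neg_pi_lt_arg z
  have harg2 := Complex.arg_le_pi z
  rcases le_or_gt 0 z.arg with h0 | h0
  · exact ⟨‖z‖, z.arg, habs, ⟨h0, by linarith⟩, hx, hy⟩
  · refine ⟨‖z‖, z.arg + 2*π, habs, ⟨by linarith, by linarith⟩, ?_, ?_⟩
    · rw [Real.cos_add_two_pi]; exact hx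
    · rw [Real.sin_add_two_pi]; exact hy

lemma aux_collinear (A B R : EuclideanSpace ℝ (Fin 2))
    (hD : (A-R) 0 * (B-R) 1 - (A-R) 1 * (B-R) 0 = 0) :
    Collinear ℝ ({A, B, R} : Set (EuclideanSpace ℝ (Fin 2))) := by
  rw [collinear_iff_of_mem (show R ∈ ({A, B, R} : Set (EuclideanSpace ℝ (Fin 2))) by simp)]
  have hD' : (A 0 - R 0) * (B 1 - R 1) - (A 1 - R 1) * (B 0 - R 0) = 0 := hD
  by_cases ha : A = R
  · refine ⟨B - R, ?_⟩
    rintro p (rfl | rfl | rfl)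
    · exact ⟨0, by rw [vadd_eq_add, zero_smul, zero_add]; exact ha⟩
    · exact ⟨1, by rw [vadd_eq_add, one_smul, sub_add_cancel]⟩
    · exact ⟨0, by rw [vadd_eq_add, zero_smul, zero_add]⟩
  · refine ⟨A - R, ?_⟩
    have h01 : ¬(A 0 - R 0 = 0 ∧ A 1 - R 1 = 0) := by
      rintro ⟨h0, h1⟩
      apply ha
      ext i
      fin_cases i
      · show A 0 = R 0; linarith
      · show A 1 = R 1; linarith
    have hBR : ∃ lam : ℝ, B - R = lam • (A - R) := by
      by_cases h0 : A 0 - R 0 = 0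
      · have h1 : A 1 - R 1 ≠ 0 := fun hh => h01 ⟨h0, hh⟩
        refine ⟨(B 1 - R 1) / (A 1 - R 1), ?_⟩
        have hb0 : B 0 - R 0 = 0 := by
          rw [h0] at hD'
          have : (A 1 - R 1) * (B 0 - R 0) = 0 := by linarith
          rcases mul_eq_zero.mp this with hc | hc
          · exact absurd hc h1
          · exact hc
        ext i
        fin_cases i
        · show B 0 - R 0 = (B 1 - R 1) / (A 1 - R 1) * (A 0 - R 0)
          rw [hb0, h0, mul_zero]
        · show B 1 - R 1 = (B 1 - R 1) / (A 1 - R 1) * (A 1 - R 1)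
          field_simp
      · refine ⟨(B 0 - R 0) / (A 0 - R 0), ?_⟩
        ext i
        fin_cases i
        · show B 0 - R 0 = (B 0 - R 0) / (A 0 - R 0) * (A 0 - R 0)
          field_simp
        · show B 1 - R 1 = (B 0 - R 0) / (A 0 - R 0) * (A 1 - R 1)
          rw [div_mul_eq_mul_div, eq_div_iff h0]
          nlinarith [hD']
    obtain ⟨lam, hlam⟩ := hBR
    rintro p (rfl | rfl | rfl)
    · exact ⟨1, by rw [vadd_eq_add, one_smul, sub_add_cancel]⟩
    · exact ⟨lam, by rw [vadd_eq_add, ← hlam, sub_add_cancel]⟩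
    · exact ⟨0, by rw [vadd_eq_add, zero_smul, zero_add]⟩

set_option maxHeartbeats 2000000 in
lemma aux_main (A B R : EuclideanSpace ℝ (Fin 2))
    (hD : 0 < (A-R) 0 * (B-R) 1 - (A-R) 1 * (B-R) 0) :
    MeasureTheory.volume
      {θ : ℝ | θ ∈ Set.Ico 0 (2 * π) ∧
        ∃ t : ℝ, 0 ≤ t ∧ ∃ s ∈ Set.Icc (0 : ℝ) 1,
          R + t • dirVec θ = A + s • (B - A)}
      = ENNReal.ofReal (∠ A R B) := by
  have hπ := Real.pi_pos
  have hD' : 0 < (A 0 - R 0) * (B 1 - R 1) - (A 1 - R 1) * (B 0 - R 0) := hD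
  set a0 : ℝ := A 0 - R 0 with ha0def
  set a1 : ℝ := A 1 - R 1 with ha1def
  set b0 : ℝ := B 0 - R 0 with hb0def
  set b1 : ℝ := B 1 - R 1 with hb1def
  -- polar form of a
  obtain ⟨r, α, hr, hα, ha0, ha1⟩ : ∃ r α, 0 < r ∧ α ∈ Ico 0 (2*π) ∧
      a0 = r * Real.cos α ∧ a1 = r * Real.sin α := by
    apply aux_polar
    rintro ⟨h0, h1⟩
    rw [h0, h1] at hD'
    simp at hD'
  have hbne : ¬(b0 = 0 ∧ b1 = 0) := by
    rintro ⟨h0, h1⟩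
    rw [h0, h1] at hD'
    simp at hD'
  set rb : ℝ := Real.sqrt (b0^2 + b1^2) with hrbdef
  have hb2pos : 0 < b0^2 + b1^2 := by
    rcases not_and_or.mp hbne with h0 | h0 <;> positivity
  have hrb : 0 < rb := Real.sqrt_pos.mpr hb2pos
  have hrb2 : rb^2 = b0^2 + b1^2 := Real.sq_sqrt hb2pos.le
  have hpyth := Real.sin_sq_add_cos_sq α
  -- norms
  have hna : ‖A - R‖ = r := by
    rw [EuclideanSpace.norm_eq]
    simp only [Fin.sum_univ_two]
    have e : ‖(A-R) 0‖^2 + ‖(A-R) 1‖^2 = r^2 := by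
      rw [Real.norm_eq_abs, Real.norm_eq_abs, sq_abs, sq_abs]
      show a0^2 + a1^2 = r^2
      rw [ha0, ha1]; linear_combination (r^2)*hpyth
    rw [e]
    exact Real.sqrt_sq hr.le
  have hnb : ‖B - R‖ = rb := by
    rw [EuclideanSpace.norm_eq]
    simp only [Fin.sum_univ_two]
    congr 1
    rw [Real.norm_eq_abs, Real.norm_eq_abs, sq_abs, sq_abs]
    rfl
  set γ : ℝ := ∠ A R B with hγdef
  have hγ0 : 0 ≤ γ := EuclideanGeometry.angle_nonneg A R B
  have hγπ : γ ≤ π := EuclideanGeometry.angle_le_pi A R B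
  have hinner : (inner ℝ (A - R) (B - R) : ℝ) = a0*b0 + a1*b1 := by
    simp only [PiLp.inner_apply, Fin.sum_univ_two, RCLike.inner_apply', conj_trivial]
    rfl
  have hcos : Real.cos γ = (a0*b0 + a1*b1)/(r*rb) := by
    rw [hγdef]
    show Real.cos (InnerProductGeometry.angle (A -ᵥ R) (B -ᵥ R)) = _
    rw [InnerProductGeometry.cos_angle]
    rw [show A -ᵥ R = A - R from rfl, show B -ᵥ R = B - R from rfl]
    rw [hinner, hna, hnb]
  have hsin : Real.sin γ = (a0*b1 - a1*b0)/(r*rb) := by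
    rw [Real.sin_eq_sqrt_one_sub_cos_sq hγ0 hγπ, hcos]
    have hr2 : r^2 = a0^2 + a1^2 := by rw [ha0, ha1]; linear_combination (-(r^2))*hpyth
    have lag : (a0*b0 + a1*b1)^2 + (a0*b1 - a1*b0)^2 = (a0^2+a1^2)*(b0^2+b1^2) := by ring
    have hrrb : (r*rb)^2 = (a0^2+a1^2)*(b0^2+b1^2) := by rw [mul_pow, hr2, hrb2]
    have key : 1 - ((a0*b0 + a1*b1)/(r*rb))^2 = ((a0*b1 - a1*b0)/(r*rb))^2 := by
      have hne : r*rb ≠ 0 := by positivity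
      field_simp
      linear_combination hrrb - lag
    rw [key, Real.sqrt_sq (by positivity)]
  have hsinpos : 0 < Real.sin γ := by
    rw [hsin]; exact div_pos hD' (mul_pos hr hrb)
  have hγpos : 0 < γ := by
    rcases hγ0.lt_or_eq with h | h
    · exact h
    · exfalso; rw [← h] at hsinpos; simp at hsinpos
  have hγlt : γ < π := by
    rcases hγπ.lt_or_eq with h | h
    · exact h
    · exfalso; rw [h] at hsinpos; simp at hsinpos
  -- b in polar form with angle α + γ
  have hcos' : Real.cos γ = (Real.cos α * b0 + Real.sin α * b1)/rb := by
    rw [hcos, ha0, ha1]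
    field_simp
  have hsin' : Real.sin γ = (Real.cos α * b1 - Real.sin α * b0)/rb := by
    rw [hsin, ha0, ha1]
    field_simp
  have hb0 : b0 = rb * Real.cos (α + γ) := by
    rw [Real.cos_add, hcos', hsin']
    field_simp [hrb.ne']
    linear_combination (-b0)*hpyth
  have hb1 : b1 = rb * Real.sin (α + γ) := by
    rw [Real.sin_add, hcos', hsin']
    field_simp [hrb.ne']
    linear_combination (-b1)*hpyth
  -- rewrite the set condition
  have hcond : ∀ θ : ℝ,
      (∃ t : ℝ, 0 ≤ t ∧ ∃ s ∈ Set.Icc (0 : ℝ) 1, R + t • dirVec θ = A + s • (B - A)) ↔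
      (0 ≤ Real.sin (θ - α) ∧ 0 ≤ Real.sin (γ - (θ - α))) := by
    intro θ
    have hcomp : ∀ t s : ℝ, (R + t • dirVec θ = A + s • (B - A)) ↔
        (t * Real.cos θ = (1-s)*a0 + s*b0 ∧ t * Real.sin θ = (1-s)*a1 + s*b1) := by
      intro t s
      rw [← (WithLp.ofLp_injective 2).eq_iff, funext_iff, Fin.forall_fin_two]
      have c0 : (R + t • dirVec θ) 0 = R 0 + t * Real.cos θ := by
        simp [dirVec]
      have c1 : (R + t • dirVec θ) 1 = R 1 + t * Real.sin θ := by
        simp [dirVec]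
      have d0 : (A + s • (B - A)) 0 = A 0 + s * (B 0 - A 0) := by simp
      have d1 : (A + s • (B - A)) 1 = A 1 + s * (B 1 - A 1) := by simp
      rw [c0, c1, d0, d1, ha0def, ha1def, hb0def, hb1def]
      constructor
      · rintro ⟨e0, e1⟩
        constructor <;> [linarith; linarith]
      · rintro ⟨e0, e1⟩
        constructor <;> [linarith; linarith]
    have hray := aux_ray_iff (a0 := a0) (a1 := a1) (b0 := b0) (b1 := b1)
      (cθ := Real.cos θ) (sθ := Real.sin θ)
      (by rw [← Real.sin_sq_add_cos_sq θ]; ring) hD'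
    have e2 : a0 * Real.sin θ - a1 * Real.cos θ = r * Real.sin (θ - α) := by
      rw [ha0, ha1, Real.sin_sub]; ring
    have e1 : Real.cos θ * b1 - Real.sin θ * b0 = rb * Real.sin (γ - (θ - α)) := by
      rw [hb0, hb1, show γ - (θ - α) = (α + γ) - θ by ring, Real.sin_sub]; ring
    constructor
    · rintro ⟨t, ht, s, hs, heq⟩
      have := hray.mp ⟨t, ht, s, ⟨hs.1, hs.2⟩, (hcomp t s).mp heq⟩
      rw [e1, e2] at this
      exact ⟨(mul_nonneg_iff_of_pos_left hr).mp this.2,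
        (mul_nonneg_iff_of_pos_left hrb).mp this.1⟩
    · rintro ⟨h1, h2⟩
      obtain ⟨t, ht, s, hs, heq⟩ := hray.mpr
        ⟨by rw [e1]; positivity, by rw [e2]; positivity⟩
      exact ⟨t, ht, s, ⟨hs.1, hs.2⟩, (hcomp t s).mpr heq⟩
  have hset : {θ : ℝ | θ ∈ Set.Ico 0 (2 * π) ∧
        ∃ t : ℝ, 0 ≤ t ∧ ∃ s ∈ Set.Icc (0 : ℝ) 1,
          R + t • dirVec θ = A + s • (B - A)} =
      {θ : ℝ | θ ∈ Set.Ico 0 (2 * π) ∧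
        (0 ≤ Real.sin (θ - α) ∧ 0 ≤ Real.sin (γ - (θ - α)))} := by
    ext θ
    exact and_congr_right fun _ => hcond θ
  rw [hset]
  obtain ⟨hα0, hα2π⟩ := hα
  rcases lt_or_ge (α + γ) (2*π) with hcase | hcase
  · have hset2 : {θ : ℝ | θ ∈ Set.Ico 0 (2 * π) ∧
        (0 ≤ Real.sin (θ - α) ∧ 0 ≤ Real.sin (γ - (θ - α)))} = Icc α (α + γ) := by
      ext θ
      simp only [mem_setOf_eq, mem_Ico, mem_Icc]
      constructor
      · rintro ⟨⟨hθ0, hθ2π⟩, hs⟩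
        have := (aux_sin_interval hγpos hγπ (x := θ - α) (by linarith) (by linarith)).mp hs
        rcases this with ⟨u1, u2⟩ | u
        · exact ⟨by linarith, by linarith⟩
        · exfalso; linarith
      · rintro ⟨hl, hu⟩
        refine ⟨⟨by linarith, by linarith⟩, ?_⟩
        exact (aux_sin_interval hγpos hγπ (x := θ - α) (by linarith) (by linarith)).mpr
          (Or.inl ⟨by linarith, by linarith⟩)
    rw [hset2, Real.volume_Icc]
    congr 1
    ring
  · have hset2 : {θ : ℝ | θ ∈ Set.Ico 0 (2 * π) ∧
        (0 ≤ Real.sin (θ - α) ∧ 0 ≤ Real.sin (γ - (θ - α)))} =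
        Ico α (2*π) ∪ Icc 0 (α + γ - 2*π) := by
      ext θ
      simp only [mem_setOf_eq, mem_Ico, mem_Icc, mem_union]
      constructor
      · rintro ⟨⟨hθ0, hθ2π⟩, hs⟩
        have := (aux_sin_interval hγpos hγπ (x := θ - α) (by linarith) (by linarith)).mp hs
        rcases this with ⟨u1, u2⟩ | u
        · exact Or.inl ⟨by linarith, hθ2π⟩
        · exact Or.inr ⟨hθ0, by linarith⟩
      · rintro (⟨hl, hu⟩ | ⟨hl, hu⟩)
        · refine ⟨⟨by linarith, hu⟩, ?_⟩
          exact (aux_sin_interval hγpos hγπ (x := θ - α) (by linarith) (by linarith)).mpr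
            (Or.inl ⟨by linarith, by linarith⟩)
        · refine ⟨⟨hl, by linarith⟩, ?_⟩
          exact (aux_sin_interval hγpos hγπ (x := θ - α) (by linarith) (by linarith)).mpr
            (Or.inr (by linarith))
    rw [hset2]
    have hdisj : Disjoint (Ico α (2*π)) (Icc (0:ℝ) (α + γ - 2*π)) := by
      rw [Set.disjoint_left]
      rintro θ ⟨h1, h2⟩ ⟨h3, h4⟩
      linarith
    rw [MeasureTheory.measure_union hdisj measurableSet_Icc, Real.volume_Ico, Real.volume_Icc,
      ← ENNReal.ofReal_add (by linarith) (by linarith)]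
    congr 1
    ring

/-- If `R` does not lie on the line through `A` and `B`, the Lebesgue measure of the
set of angles `θ ∈ [0, 2π)` for which the ray from `R` in direction `(cos θ, sin θ)`
meets the closed segment `[A, B]` equals the undirected angle `∠ A R B`. -/
theorem stmt_2 (A B R : EuclideanSpace ℝ (Fin 2))
    (h : ¬ Collinear ℝ ({A, B, R} : Set (EuclideanSpace ℝ (Fin 2)))) :
    MeasureTheory.volume
      {θ : ℝ | θ ∈ Set.Ico 0 (2 * π) ∧
        ∃ t : ℝ, 0 ≤ t ∧ ∃ s ∈ Set.Icc (0 : ℝ) 1,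
          R + t • dirVec θ = A + s • (B - A)}
      = ENNReal.ofReal (∠ A R B) := by
  have hDne : (A-R) 0 * (B-R) 1 - (A-R) 1 * (B-R) 0 ≠ 0 := fun h0 => h (aux_collinear A B R h0)
  rcases lt_or_gt_of_ne hDne with hneg | hpos
  · -- swap A and B
    have hswap : ∀ s : ℝ, A + s • (B - A) = B + (1-s) • (A - B) := by
      intro s
      rw [sub_smul, one_smul, smul_sub, smul_sub]
      abel
    have hsetswap : {θ : ℝ | θ ∈ Set.Ico 0 (2 * π) ∧
        ∃ t : ℝ, 0 ≤ t ∧ ∃ s ∈ Set.Icc (0 : ℝ) 1,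
          R + t • dirVec θ = A + s • (B - A)} =
        {θ : ℝ | θ ∈ Set.Ico 0 (2 * π) ∧
        ∃ t : ℝ, 0 ≤ t ∧ ∃ s ∈ Set.Icc (0 : ℝ) 1,
          R + t • dirVec θ = B + s • (A - B)} := by
      ext θ
      refine and_congr_right fun _ => exists_congr fun t => and_congr_right fun _ => ?_
      constructor
      · rintro ⟨s, hs, heq⟩
        exact ⟨1 - s, ⟨by linarith [hs.2], by linarith [hs.1]⟩, by rw [heq, hswap s]⟩
      · rintro ⟨s, hs, heq⟩
        refine ⟨1 - s, ⟨by linarith [hs.2], by linarith [hs.1]⟩, ?_⟩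
        rw [heq, hswap (1-s)]
        norm_num
    rw [hsetswap, EuclideanGeometry.angle_comm]
    have hx : (A 0 - R 0) * (B 1 - R 1) - (A 1 - R 1) * (B 0 - R 0) < 0 := hneg
    have hpos' : 0 < (B-R) 0 * (A-R) 1 - (B-R) 1 * (A-R) 0 := by
      show 0 < (B 0 - R 0) * (A 1 - R 1) - (B 1 - R 1) * (A 0 - R 0)
      nlinarith [hx]
    exact aux_main B A R hpos'
  · exact aux_main A B R hpos
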